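/- arXiv:0804.3553 — 4 statements merged into one kernel-verified Lean document; each statement's English description precedes it below -/
import Mathlib

section
/- For a group G, an element ζ ∈ G with ζ^ℓ = 1 (ℓ a prime), and nonnegative integers s and i, the shuffle product of the bar-complex chains [ζ]^(s) and [ζ]^(i) equals binom(s+i, i) · [ζ]^(s+i), where [ζ]^(s) denotes the sum over all tuples (i_1,...,i_s) with 1 ≤ i_j ≤ ℓ−1 of the bar chain [ζ^{i_1}|ζ|ζ^{i_2}|ζ|...|ζ^{i_s}|ζ] in the degree-2s part of the normalized bar complex. -/
set_option linter.unusedSectionVars false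
set_option maxHeartbeats 1000000


open scoped Classical

open Finsupp

/-- Chains of the (normalized) bar complex of `G` over `k`: the free `k`-module
on lists of elements of `G`. -/
abbrev BarChain (G : Type*) [Group G] (k : Type*) [CommRing k] := List G →₀ k

variable {G : Type*} [Group G] {k : Type*} [CommRing k]

/-- The normalized bar symbol `[x₁|...|x_s]`: zero if some entry equals `1`. -/
noncomputable def barSym (l : List G) : BarChain G k :=
  if (1 : G) ∈ l then 0 else Finsupp.single l 1

/-- Normalization map, killing all basis lists containing `1`. -/
noncomputable def barNorm : BarChain G k →ₗ[k] BarChain G k :=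
  Finsupp.lsum k fun l => LinearMap.toSpanSingleton k _ (barSym l)

/-- Merge the `j`-th and `(j+1)`-st entries of a list by multiplying them. -/
def mergeAt (l : List G) (j : ℕ) : List G :=
  l.take j ++ [l.getD j 1 * l.getD (j+1) 1] ++ l.drop (j+2)

/-- The boundary of a bar symbol (normalized convention: symbols with an entry
equal to `1` are zero). -/
noncomputable def barDList (l : List G) : BarChain G k :=
  if l = [] then 0 else
    barSym l.tail
      + ∑ j ∈ Finset.range (l.length - 1), ((-1 : k)^(j+1)) • barSym (mergeAt l j)
      + ((-1 : k)^l.length) • barSym l.dropLast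

/-- The boundary operator of the normalized bar complex. -/
noncomputable def barD : BarChain G k →ₗ[k] BarChain G k :=
  Finsupp.lsum k fun l => LinearMap.toSpanSingleton k _ (barDList l)

/-- The (signed) shuffle of two lists. -/
noncomputable def shuffleList : List G → List G → BarChain G k
  | [], l => Finsupp.single l 1
  | l, [] => Finsupp.single l 1
  | x :: xs, y :: ys =>
      Finsupp.mapDomain (x :: ·) (shuffleList xs (y :: ys))
        + ((-1 : k)^(xs.length + 1)) • Finsupp.mapDomain (y :: ·) (shuffleList (x :: xs) ys)
  termination_by l1 l2 => l1.length + l2.length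

lemma shuffleList_nil_left (l : List G) : shuffleList [] l = (Finsupp.single l 1 : BarChain G k) := by
  rw [shuffleList]

lemma shuffleList_nil_right (l : List G) : shuffleList l [] = (Finsupp.single l 1 : BarChain G k) := by
  cases l with
  | nil => rw [shuffleList]
  | cons x xs => rw [shuffleList]; simp

lemma shuffleList_cons_cons (x y : G) (xs ys : List G) :
    (shuffleList (x::xs) (y::ys) : BarChain G k) =
      Finsupp.mapDomain (x :: ·) (shuffleList xs (y :: ys))
        + ((-1 : k)^(xs.length + 1)) • Finsupp.mapDomain (y :: ·) (shuffleList (x :: xs) ys) := by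
  rw [shuffleList]

lemma mapDomain_sum_smul {γ : Type*} (g : List G → List G) (t : Finset γ) (c : γ → k)
    (F : γ → BarChain G k) :
    Finsupp.mapDomain g (∑ j ∈ t, c j • F j) = ∑ j ∈ t, c j • Finsupp.mapDomain g (F j) := by
  simp only [← Finsupp.lmapDomain_apply k k g, map_sum, map_smul]

lemma shuffle_single_left (y : G) (l : List G) :
    (shuffleList [y] l : BarChain G k)
      = ∑ p ∈ Finset.range (l.length + 1), ((-1 : k)^p) • Finsupp.single (l.insertIdx p y) 1 := by
  induction l with
  | nil => simp [shuffleList_nil_right]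
  | cons z zs ih =>
      rw [shuffleList_cons_cons, shuffleList_nil_left, ih]
      rw [List.length_cons, Finset.sum_range_succ' _ (zs.length + 1)]
      rw [mapDomain_sum_smul]
      simp only [Finsupp.mapDomain_single, List.insertIdx_succ_cons, List.insertIdx_zero,
        pow_succ, pow_zero, one_mul, neg_one_mul, neg_smul, one_smul, List.length_nil]
      rw [add_comm]
      congr 1
      · rw [← Finset.sum_neg_distrib]
        refine Finset.sum_congr rfl fun p hp => ?_
        rw [mul_neg_one, neg_smul]

lemma shuffle_single_right (l : List G) (y : G) :
    (shuffleList l [y] : BarChain G k)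
      = ∑ p ∈ Finset.range (l.length + 1),
          ((-1 : k)^(l.length + p)) • Finsupp.single (l.insertIdx p y) 1 := by
  induction l with
  | nil => simp [shuffleList_nil_left]
  | cons z zs ih =>
      rw [shuffleList_cons_cons, shuffleList_nil_right, ih, mapDomain_sum_smul]
      simp only [Finsupp.mapDomain_single, List.length_cons]
      rw [Finset.sum_range_succ'
        (fun p => ((-1 : k)^(zs.length + 1 + p)) • Finsupp.single ((z::zs).insertIdx p y) 1)
        (zs.length + 1)]
      simp only [List.insertIdx_succ_cons, List.insertIdx_zero, add_zero]
      congr 1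
      refine Finset.sum_congr rfl fun p hp => ?_
      congr 1
      have h2 : zs.length + 1 + (p + 1) = (zs.length + p) + 2 := by ring
      rw [h2]; simp [pow_add]

section Words
variable {ι : Type*} [Fintype ι]

/-- The word `x (f 0), y, x (f 1), y, ..., x (f (s-1)), y`. -/
def wd (x : ι → G) (y : G) {s : ℕ} (f : Fin s → ι) : List G :=
  (List.ofFn fun j => [x (f j), y]).flatten

lemma wd_zero (x : ι → G) (y : G) (f : Fin 0 → ι) : wd x y f = [] := by simp [wd]

lemma wd_cons (x : ι → G) (y : G) {s : ℕ} (a : ι) (f : Fin s → ι) :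
    wd x y (Fin.cons a f) = x a :: y :: wd x y f := by
  simp [wd, List.ofFn_succ]

lemma wd_length (x : ι → G) (y : G) {s : ℕ} (f : Fin s → ι) : (wd x y f).length = 2 * s := by
  simp [wd, Function.comp_def, mul_comm]

lemma sum_pi_cons {M : Type*} [AddCommMonoid M] {s : ℕ} (F : (Fin (s+1) → ι) → M) :
    ∑ f : Fin (s+1) → ι, F f = ∑ a : ι, ∑ f : Fin s → ι, F (Fin.cons a f) := by
  calc ∑ f : Fin (s+1) → ι, F f
      = ∑ p : ι × (Fin s → ι), F (Fin.cons p.1 p.2) :=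
        (Fintype.sum_equiv (Fin.consEquiv fun _ => ι) _ _ fun p => rfl).symm
    _ = _ := Fintype.sum_prod_type _

/-- Key cancellation: alternating-sign insertions of `y` into `y :: wd f` cancel out. -/
lemma ins_cancel (x : ι → G) (y : G) : ∀ {s : ℕ} (f : Fin s → ι),
    ∑ p ∈ Finset.range (2*s + 2),
        ((-1 : k)^p) • Finsupp.single ((y :: wd x y f).insertIdx p y) (1:k) = 0 := by
  intro s
  induction s with
  | zero =>
      intro f
      rw [wd_zero]
      simp [Finset.sum_range_succ, List.insertIdx_succ_cons]
  | succ s ih =>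
      intro f
      rw [← Fin.cons_self_tail f, wd_cons]
      have hr : 2*(s+1) + 2 = (2*s + 2) + 1 + 1 := by ring
      rw [hr]
      rw [Finset.sum_range_succ'
        (fun p => ((-1 : k)^p) • Finsupp.single
          ((y :: x (f 0) :: y :: wd x y (Fin.tail f)).insertIdx p y) (1:k)) (2*s + 2 + 1)]
      rw [Finset.sum_range_succ'
        (fun p => ((-1 : k)^(p+1)) • Finsupp.single
          ((y :: x (f 0) :: y :: wd x y (Fin.tail f)).insertIdx (p+1) y) (1:k)) (2*s + 2)]
      simp only [List.insertIdx_succ_cons, List.insertIdx_zero, pow_zero, one_smul, pow_one]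
      have hc : ∀ p : ℕ, ((-1:k)^(p+1+1)) = (-1)^p := by
        intro p; rw [pow_succ, pow_succ]; ring
      have : (∑ p ∈ Finset.range (2*s+2), ((-1:k)^(p+1+1)) •
            Finsupp.single (y :: x (f 0) :: (y :: wd x y (Fin.tail f)).insertIdx p y) (1:k))
          = Finsupp.mapDomain (fun l => y :: x (f 0) :: l)
              (∑ p ∈ Finset.range (2*s+2), ((-1:k)^p) •
                Finsupp.single ((y :: wd x y (Fin.tail f)).insertIdx p y) (1:k)) := by
        rw [mapDomain_sum_smul]
        exact Finset.sum_congr rfl fun p hp => by rw [hc p, Finsupp.mapDomain_single]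
      rw [this, ih]
      simp
end Words

section TSums
variable {ι : Type*} [Fintype ι]

/-- `cons` as a linear operator on bar chains. -/
noncomputable def consOp (g : G) : BarChain G k →ₗ[k] BarChain G k :=
  Finsupp.lmapDomain k k (g :: ·)

lemma consOp_apply (g : G) (v : BarChain G k) :
    consOp g v = Finsupp.mapDomain (g :: ·) v := rfl

lemma consOp_single (g : G) (l : List G) :
    consOp g (Finsupp.single l (1:k)) = Finsupp.single (g :: l) 1 := by
  rw [consOp_apply, Finsupp.mapDomain_single]

lemma sum_pi_zero {M : Type*} [AddCommMonoid M] (F : (Fin 0 → ι) → M) (f₀ : Fin 0 → ι) :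
    ∑ f : Fin 0 → ι, F f = F f₀ := by
  have h : ∀ f : Fin 0 → ι, f = f₀ := fun f => funext fun j => j.elim0
  rw [Fintype.sum_eq_single f₀ fun f hf => absurd (h f) hf]

variable (x : ι → G) (y : G)

lemma yy_right {s : ℕ} (f : Fin s → ι) :
    (shuffleList (y :: wd x y f) [y] : BarChain G k) = 0 := by
  have hl : (y :: wd x y f).length = 2*s + 1 := by simp [wd_length]
  rw [shuffle_single_right, hl]
  have : ∀ p : ℕ, ((-1:k)^(2*s+1+p)) = (-1)^(2*s+1) * (-1)^p := fun p => pow_add _ _ _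
  simp only [this, ← smul_smul]
  rw [← Finset.smul_sum]
  have h2 : 2*s + 1 + 1 = 2*s + 2 := rfl
  rw [h2, ins_cancel, smul_zero]

lemma yy_left {i : ℕ} (g : Fin i → ι) :
    (shuffleList [y] (y :: wd x y g) : BarChain G k) = 0 := by
  have hl : (y :: wd x y g).length = 2*i + 1 := by simp [wd_length]
  rw [shuffle_single_left, hl]
  have h2 : 2*i + 1 + 1 = 2*i + 2 := rfl
  rw [h2, ins_cancel]

/-- Expansion of `T01 = Σ shuffle (wd f) (y :: wd g)`, assuming the `T11` sum vanishes. -/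
lemma T01_expand (s i2 : ℕ)
    (h : (∑ f : Fin s → ι, ∑ g : Fin i2 → ι,
        shuffleList (y :: wd x y f) (y :: wd x y g)) = (0 : BarChain G k)) :
    (∑ f : Fin (s+1) → ι, ∑ g : Fin i2 → ι, shuffleList (wd x y f) (y :: wd x y g)
        : BarChain G k)
      = consOp y (∑ f : Fin (s+1) → ι, ∑ g : Fin i2 → ι,
          shuffleList (wd x y f) (wd x y g)) := by
  have hterm : ∀ (a : ι) (f : Fin s → ι) (g : Fin i2 → ι),
      (shuffleList (wd x y (Fin.cons a f)) (y :: wd x y g) : BarChain G k)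
        = consOp (x a) (shuffleList (y :: wd x y f) (y :: wd x y g))
          + consOp y (shuffleList (wd x y (Fin.cons a f)) (wd x y g)) := by
    intro a f g
    rw [wd_cons, shuffleList_cons_cons, ← wd_cons x y a f]
    have hs : ((y :: wd x y f).length + 1) = 2*s + 2 := by simp [wd_length]
    rw [hs, Even.neg_one_pow ⟨s+1, by ring⟩, one_smul, consOp_apply, consOp_apply]
  rw [sum_pi_cons (fun f => ∑ g : Fin i2 → ι,
    (shuffleList (wd x y f) (y :: wd x y g) : BarChain G k))]
  rw [sum_pi_cons (fun f => ∑ g : Fin i2 → ι,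
    (shuffleList (wd x y f) (wd x y g) : BarChain G k))]
  simp only [hterm, Finset.sum_add_distrib, ← map_sum]
  rw [h]
  simp

/-- Expansion of `T10 = Σ shuffle (y :: wd f) (wd g)`, assuming the `T11` sum vanishes. -/
lemma T10_expand (s2 i : ℕ)
    (h : (∑ f : Fin s2 → ι, ∑ g : Fin i → ι,
        shuffleList (y :: wd x y f) (y :: wd x y g)) = (0 : BarChain G k)) :
    (∑ f : Fin s2 → ι, ∑ g : Fin (i+1) → ι, shuffleList (y :: wd x y f) (wd x y g)
        : BarChain G k)
      = consOp y (∑ f : Fin s2 → ι, ∑ g : Fin (i+1) → ι,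
          shuffleList (wd x y f) (wd x y g)) := by
  have hterm : ∀ (f : Fin s2 → ι) (b : ι) (g : Fin i → ι),
      (shuffleList (y :: wd x y f) (wd x y (Fin.cons b g)) : BarChain G k)
        = consOp y (shuffleList (wd x y f) (wd x y (Fin.cons b g)))
          - consOp (x b) (shuffleList (y :: wd x y f) (y :: wd x y g)) := by
    intro f b g
    rw [wd_cons x y b g, shuffleList_cons_cons, ← wd_cons x y b g]
    have hs : (wd x y f).length + 1 = 2*s2 + 1 := by simp [wd_length]
    rw [hs, Odd.neg_one_pow ⟨s2, by ring⟩, consOp_apply, consOp_apply, neg_smul, one_smul,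
      ← sub_eq_add_neg]
  have h1 : ∀ f : Fin s2 → ι,
      (∑ g : Fin (i+1) → ι, shuffleList (y :: wd x y f) (wd x y g) : BarChain G k)
        = consOp y (∑ g : Fin (i+1) → ι, shuffleList (wd x y f) (wd x y g))
          - ∑ b : ι, consOp (x b)
              (∑ g : Fin i → ι, shuffleList (y :: wd x y f) (y :: wd x y g)) := by
    intro f
    rw [sum_pi_cons (fun g => (shuffleList (y :: wd x y f) (wd x y g) : BarChain G k))]
    rw [sum_pi_cons (fun g => (shuffleList (wd x y f) (wd x y g) : BarChain G k))]
    simp only [hterm, Finset.sum_sub_distrib, ← map_sum]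
  rw [Finset.sum_congr rfl (fun f _ => h1 f), Finset.sum_sub_distrib]
  have hc : (∑ f : Fin s2 → ι, ∑ b : ι, consOp (x b)
      (∑ g : Fin i → ι, (shuffleList (y :: wd x y f) (y :: wd x y g) : BarChain G k)))
      = ∑ b : ι, consOp (x b) (∑ f : Fin s2 → ι, ∑ g : Fin i → ι,
          (shuffleList (y :: wd x y f) (y :: wd x y g) : BarChain G k)) := by
    rw [Finset.sum_comm]
    simp only [← map_sum]
  rw [hc, h]
  simp only [← map_sum]
  simp

/-- The double sum of shuffles of `y`-prefixed words vanishes. -/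
lemma T11_zero (s i : ℕ) :
    (∑ f : Fin s → ι, ∑ g : Fin i → ι,
        shuffleList (y :: wd x y f) (y :: wd x y g)) = (0 : BarChain G k) := by
  suffices H : ∀ (n s i : ℕ), s + i = n → (∑ f : Fin s → ι, ∑ g : Fin i → ι,
      shuffleList (y :: wd x y f) (y :: wd x y g)) = (0 : BarChain G k) from
    H (s+i) s i rfl
  intro n
  induction n with
  | zero =>
      intro s i hsi
      obtain ⟨hs, hi⟩ : s = 0 ∧ i = 0 := by omega
      subst hs; subst hi
      rw [sum_pi_zero _ (fun j => j.elim0)]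
      refine Finset.sum_eq_zero fun g _ => ?_
      rw [wd_zero]
      exact yy_left x y g
  | succ n ih =>
      intro s i hsi
      match s, i with
      | 0, i =>
          rw [sum_pi_zero _ (fun j => j.elim0)]
          refine Finset.sum_eq_zero fun g _ => ?_
          rw [wd_zero]
          exact yy_left x y g
      | s, 0 =>
          refine Finset.sum_eq_zero fun f _ => ?_
          rw [sum_pi_zero _ (fun j => j.elim0), wd_zero]
          exact yy_right x y f
      | s+1, i+1 =>
          have hterm : ∀ (f : Fin (s+1) → ι) (g : Fin (i+1) → ι),
              (shuffleList (y :: wd x y f) (y :: wd x y g) : BarChain G k)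
                = consOp y (shuffleList (wd x y f) (y :: wd x y g))
                  - consOp y (shuffleList (y :: wd x y f) (wd x y g)) := by
            intro f g
            rw [shuffleList_cons_cons]
            have hs : (wd x y f).length + 1 = 2*(s+1) + 1 := by simp [wd_length]
            rw [hs, Odd.neg_one_pow ⟨s+1, by ring⟩, consOp_apply, consOp_apply, neg_smul,
              one_smul, ← sub_eq_add_neg]
          simp only [hterm, Finset.sum_sub_distrib, ← map_sum]
          rw [T01_expand x y s (i+1) (ih s (i+1) (by omega)),
            T10_expand x y (s+1) i (ih (s+1) i (by omega))]
          simp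

/-- `T10 = consOp y T00`. -/
lemma T10_eq (s i : ℕ) :
    (∑ f : Fin s → ι, ∑ g : Fin i → ι, shuffleList (y :: wd x y f) (wd x y g)
        : BarChain G k)
      = consOp y (∑ f : Fin s → ι, ∑ g : Fin i → ι, shuffleList (wd x y f) (wd x y g)) := by
  cases i with
  | zero =>
      simp only [sum_pi_zero _ (fun j => j.elim0), wd_zero, shuffleList_nil_right]
      rw [map_sum]
      exact Finset.sum_congr rfl fun f _ => (consOp_single y _).symm
  | succ i => exact T10_expand x y s i (T11_zero x y s i)

/-- `T01 = consOp y T00`. -/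
lemma T01_eq (s i : ℕ) :
    (∑ f : Fin s → ι, ∑ g : Fin i → ι, shuffleList (wd x y f) (y :: wd x y g)
        : BarChain G k)
      = consOp y (∑ f : Fin s → ι, ∑ g : Fin i → ι, shuffleList (wd x y f) (wd x y g)) := by
  cases s with
  | zero =>
      rw [sum_pi_zero _ (fun j => j.elim0), sum_pi_zero
        (fun f => (∑ g : Fin i → ι, shuffleList (wd x y f) (wd x y g) : BarChain G k))
        (fun j => j.elim0)]
      simp only [wd_zero, shuffleList_nil_left, map_sum, consOp_single]
  | succ s => exact T01_expand x y s i (T11_zero x y s i)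

end TSums

section Main
variable {ι : Type*} [Fintype ι]

/-- The basic chain `Σ_f [wd f]` (unnormalized). -/
noncomputable def Zt (x : ι → G) (y : G) (n : ℕ) : BarChain G k :=
  ∑ f : Fin n → ι, Finsupp.single (wd x y f) (1:k)

variable (x : ι → G) (y : G)

lemma Zt_succ (n : ℕ) :
    ∑ a : ι, consOp (x a) (consOp y (Zt x y n)) = (Zt x y (n+1) : BarChain G k) := by
  simp only [Zt, map_sum, consOp_single]
  rw [sum_pi_cons (fun f => Finsupp.single (wd x y f) (1:k))]
  simp only [wd_cons]

lemma T00_eq : ∀ (n s i : ℕ), s + i = n →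
    (∑ f : Fin s → ι, ∑ g : Fin i → ι, shuffleList (wd x y f) (wd x y g) : BarChain G k)
      = ((s + i).choose i : k) • Zt x y (s + i) := by
  intro n
  induction n with
  | zero =>
      intro s i hsi
      obtain ⟨hs, hi⟩ : s = 0 ∧ i = 0 := by omega
      subst hs; subst hi
      rw [sum_pi_zero _ (fun j => j.elim0)]
      simp only [wd_zero, shuffleList_nil_left]
      simp [Zt, wd_zero]
  | succ n ih =>
      intro s i hsi
      match s, i with
      | 0, i =>
          rw [sum_pi_zero _ (fun j => j.elim0)]
          simp only [wd_zero, shuffleList_nil_left, Nat.zero_add]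
          simp [Zt]
      | s, 0 =>
          have : ∀ f : Fin s → ι,
              (∑ g : Fin 0 → ι, shuffleList (wd x y f) (wd x y g) : BarChain G k)
                = Finsupp.single (wd x y f) 1 := by
            intro f
            rw [sum_pi_zero _ (fun j => j.elim0), wd_zero, shuffleList_nil_right]
          rw [Finset.sum_congr rfl fun f _ => this f]
          simp only [Nat.add_zero]
          simp [Zt]
      | s+1, i+1 =>
          have hterm : ∀ (a : ι) (f : Fin s → ι) (b : ι) (g : Fin i → ι),
              (shuffleList (wd x y (Fin.cons a f)) (wd x y (Fin.cons b g)) : BarChain G k)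
                = consOp (x a) (shuffleList (y :: wd x y f) (wd x y (Fin.cons b g)))
                  + consOp (x b) (shuffleList (wd x y (Fin.cons a f)) (y :: wd x y g)) := by
            intro a f b g
            rw [wd_cons x y a f, wd_cons x y b g, shuffleList_cons_cons,
              ← wd_cons x y a f, ← wd_cons x y b g]
            have hs : ((y :: wd x y f).length + 1) = 2*s + 2 := by simp [wd_length]
            rw [hs, Even.neg_one_pow ⟨s+1, by ring⟩, one_smul, consOp_apply, consOp_apply]
          rw [sum_pi_cons (fun f => ∑ g : Fin (i+1) → ι,
            (shuffleList (wd x y f) (wd x y g) : BarChain G k))]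
          have inner : ∀ (a : ι) (f : Fin s → ι),
              (∑ g : Fin (i+1) → ι,
                  (shuffleList (wd x y (Fin.cons a f)) (wd x y g) : BarChain G k))
                = ∑ b : ι, ∑ g : Fin i → ι,
                    (shuffleList (wd x y (Fin.cons a f)) (wd x y (Fin.cons b g))) :=
            fun a f => sum_pi_cons
              (fun g => (shuffleList (wd x y (Fin.cons a f)) (wd x y g) : BarChain G k))
          simp only [inner, hterm, Finset.sum_add_distrib, ← map_sum]
          -- term 1
          have t1 : (∑ f : Fin s → ι, ∑ b : ι, ∑ g : Fin i → ι,
                (shuffleList (y :: wd x y f) (wd x y (Fin.cons b g)) : BarChain G k))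
              = consOp y (∑ f : Fin s → ι, ∑ g : Fin (i+1) → ι,
                  shuffleList (wd x y f) (wd x y g)) := by
            rw [← T10_eq x y s (i+1)]
            exact Finset.sum_congr rfl fun f _ =>
              (sum_pi_cons (fun g => (shuffleList (y :: wd x y f) (wd x y g)
                : BarChain G k))).symm
          -- term 2 : reorder sums
          have t2 : (∑ a : ι, ∑ f : Fin s → ι, ∑ b : ι, consOp (x b)
                (∑ g : Fin i → ι,
                  (shuffleList (wd x y (Fin.cons a f)) (y :: wd x y g) : BarChain G k)))
              = ∑ b : ι, consOp (x b) (consOp y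
                  (∑ f : Fin (s+1) → ι, ∑ g : Fin i → ι,
                    shuffleList (wd x y f) (wd x y g))) := by
            have swap1 : ∀ a : ι, (∑ f : Fin s → ι, ∑ b : ι, consOp (x b)
                  (∑ g : Fin i → ι,
                    (shuffleList (wd x y (Fin.cons a f)) (y :: wd x y g) : BarChain G k)))
                = ∑ b : ι, ∑ f : Fin s → ι, consOp (x b)
                  (∑ g : Fin i → ι,
                    (shuffleList (wd x y (Fin.cons a f)) (y :: wd x y g) : BarChain G k)) :=
              fun a => Finset.sum_comm
            rw [Finset.sum_congr rfl fun a _ => swap1 a, Finset.sum_comm]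
            refine Finset.sum_congr rfl fun b _ => ?_
            simp only [← map_sum]
            congr 1
            rw [← T01_eq x y (s+1) i]
            rw [sum_pi_cons (fun f => ∑ g : Fin i → ι,
              (shuffleList (wd x y f) (y :: wd x y g) : BarChain G k))]
          rw [t1, t2]
          rw [ih s (i+1) (by omega), ih (s+1) i (by omega)]
          simp only [map_smul, ← Finset.smul_sum]
          have hz1 : s + (i+1) = s + i + 1 := by ring
          have hz2 : (s+1) + i = s + i + 1 := by ring
          rw [hz1, hz2, Zt_succ x y (s+i+1)]
          have hr : (s+1) + (i+1) = (s+i+1) + 1 := by ring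
          rw [hr, ← add_smul]
          congr 1
          rw [Nat.choose_succ_succ (s+i+1) i]
          push_cast
          ring
end Main


/-- The bilinear shuffle product on bar chains. -/
noncomputable def barSh : BarChain G k →ₗ[k] BarChain G k →ₗ[k] BarChain G k :=
  Finsupp.lsum k fun l1 => LinearMap.toSpanSingleton k _
    ((Finsupp.lsum k fun l2 => LinearMap.toSpanSingleton k _ (shuffleList l1 l2) :
      BarChain G k →ₗ[k] BarChain G k))

section Glue
variable {ι : Type*} [Fintype ι]

lemma barNorm_single (l : List G) : barNorm (Finsupp.single l (1:k)) = barSym l := by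
  simp [barNorm, Finsupp.lsum_single]

lemma barSh_single (l l' : List G) :
    barSh (Finsupp.single l (1:k)) (Finsupp.single l' 1) = shuffleList l l' := by
  simp [barSh, Finsupp.lsum_single]

lemma mem_wd {x : ι → G} {y c : G} {s : ℕ} {f : Fin s → ι} (h : c ∈ wd x y f) :
    c = y ∨ ∃ j, c = x (f j) := by
  simp only [wd, List.mem_flatten, List.mem_ofFn, Set.mem_range] at h
  obtain ⟨l, ⟨j, rfl⟩, hc⟩ := h
  simp only [List.mem_cons, List.not_mem_nil, or_false] at hc
  rcases hc with h | h
  · exact Or.inr ⟨j, h⟩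
  · exact Or.inl h

lemma y_mem_wd (x : ι → G) (y : G) {s : ℕ} (f : Fin (s+1) → ι) : y ∈ wd x y f := by
  rw [← Fin.cons_self_tail f, wd_cons]
  simp
end Glue

/-- The shuffle product in the normalized bar complex. -/
noncomputable def barNSh (a b : BarChain G k) : BarChain G k :=
  barNorm (barSh a b)

/-- The chain `[ζ]^(s) = Σ_{i₁,...,i_s = 1}^{ℓ-1} [ζ^{i₁}|ζ|...|ζ^{i_s}|ζ]`. -/
noncomputable def zetaChain (ℓ : ℕ) (ζ : G) (s : ℕ) : BarChain G k :=
  ∑ f : Fin s → Fin (ℓ - 1),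
    barSym ((List.ofFn (fun j => [ζ ^ ((f j : ℕ) + 1), ζ])).flatten)

/-- The iterated shuffle product `⟨x₁,...,x_i⟩ = [x₁] ∧ ... ∧ [x_i]`. -/
noncomputable def wedgeList (l : List G) : BarChain G k :=
  l.foldr (fun g acc => barNSh (barSym [g]) acc) (barSym [])

/-- `[ζ]^(s) ∧ [ζ]^(i) = C(s+i, i) · [ζ]^(s+i)`. -/
theorem stmt0 {G : Type*} [Group G] {k : Type*} [CommRing k]
    (ℓ : ℕ) (hℓ : ℓ.Prime) (ζ : G) (hζ : ζ ^ ℓ = 1) (s i : ℕ) :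
    barNSh (zetaChain ℓ ζ s : BarChain G k) (zetaChain ℓ ζ i)
      = ((s + i).choose i : k) • zetaChain ℓ ζ (s + i) := by
  classical
  set x : Fin (ℓ-1) → G := fun a => ζ ^ ((a:ℕ)+1) with hxdef
  have hzeta : ∀ n : ℕ, zetaChain ℓ ζ n
      = (∑ f : Fin n → Fin (ℓ-1), barSym (wd x ζ f) : BarChain G k) := fun n => rfl
  by_cases h1 : ζ = 1
  · subst h1
    rcases Nat.eq_zero_or_pos (s + i) with h0 | hpos
    · obtain ⟨hs, hi⟩ : s = 0 ∧ i = 0 := by omega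
      subst hs; subst hi
      have hz0 : zetaChain ℓ (1:G) 0 = (Finsupp.single [] 1 : BarChain G k) := by
        rw [hzeta 0, sum_pi_zero _ (fun j => j.elim0), wd_zero]
        simp [barSym]
      rw [hz0, barNSh, barSh_single, shuffleList_nil_left, barNorm_single]
      simp [barSym]
    · have hz : ∀ n, 0 < n → zetaChain ℓ (1:G) n = (0 : BarChain G k) := by
        intro n hn
        obtain ⟨m, rfl⟩ := Nat.exists_eq_succ_of_ne_zero (by omega : n ≠ 0)
        rw [hzeta]
        refine Finset.sum_eq_zero fun f _ => ?_
        have hm := y_mem_wd x (1:G) f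
        simp [barSym, hm]
      rw [hz _ hpos, smul_zero]
      rcases Nat.eq_zero_or_pos s with hs | hs
      · have hi : 0 < i := by omega
        rw [barNSh, hz i hi, map_zero, map_zero]
      · rw [barNSh, hz s hs, map_zero, LinearMap.zero_apply, map_zero]
  · have horder : orderOf ζ = ℓ := by
      rcases (Nat.Prime.eq_one_or_self_of_dvd hℓ _ (orderOf_dvd_of_pow_eq_one hζ)) with h | h
      · exact absurd (orderOf_eq_one_iff.mp h) h1
      · exact h
    have hnot : ∀ {n : ℕ} (f : Fin n → Fin (ℓ-1)), (1:G) ∉ wd x ζ f := by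
      intro n f hmem
      have h2 := hℓ.two_le
      rcases mem_wd hmem with h | ⟨j, hj⟩
      · exact h1 h.symm
      · have hlt : ((f j : ℕ) + 1) < ℓ := by have := (f j).isLt; omega
        have hdvd : orderOf ζ ∣ ((f j : ℕ) + 1) := orderOf_dvd_of_pow_eq_one hj.symm
        rw [horder] at hdvd
        have := Nat.le_of_dvd (by omega) hdvd
        omega
    have hsym : ∀ {n : ℕ} (f : Fin n → Fin (ℓ-1)),
        barSym (wd x ζ f) = (Finsupp.single (wd x ζ f) 1 : BarChain G k) := by
      intro n f
      rw [barSym, if_neg (hnot f)]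
    have hZ : ∀ n, zetaChain ℓ ζ n = (Zt x ζ n : BarChain G k) := by
      intro n
      rw [hzeta n]
      exact Finset.sum_congr rfl fun f _ => hsym f
    rw [barNSh, hZ s, hZ i, hZ (s+i)]
    have hbil : barSh (Zt x ζ s : BarChain G k) (Zt x ζ i)
        = ∑ f : Fin s → Fin (ℓ-1), ∑ g : Fin i → Fin (ℓ-1),
            shuffleList (wd x ζ f) (wd x ζ g) := by
      rw [Zt, Zt]
      simp only [map_sum, LinearMap.sum_apply, barSh_single]
      exact Finset.sum_comm
    rw [hbil, T00_eq x ζ (s+i) s i rfl, map_smul]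
    congr 1
    rw [Zt]
    simp only [map_sum, barNorm_single]
    exact Finset.sum_congr rfl fun f _ => hsym f
end

section
/- Let ℓ be an odd prime, ξ a primitive ℓ-th root of unity in C, and R = Z[1/ℓ, ξ]. Then ℓ = (−1)^r λ² in R, where r = (ℓ−1)/2 and λ = ξ^c (1−ξ)(1−ξ²)···(1−ξ^r), with c ≥ 0 the smallest integer such that 2c ≡ r² + r(r+1)/2 (mod ℓ). -/
private lemma stmt5_auxS (r : ℕ) :
    2 * ∑ i ∈ Finset.Ioc 0 r, (2 * r + 1 - i) = 2 * r ^ 2 + r * (r + 1) := by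
  induction r with
  | zero => simp
  | succ n ih =>
    rw [Finset.sum_Ioc_succ_top (Nat.zero_le _)]
    have h1 : ∑ i ∈ Finset.Ioc 0 n, (2 * (n + 1) + 1 - i)
        = (∑ i ∈ Finset.Ioc 0 n, (2 * n + 1 - i)) + ∑ _i ∈ Finset.Ioc 0 n, 2 := by
      rw [← Finset.sum_add_distrib]
      refine Finset.sum_congr rfl fun i hi => ?_
      simp only [Finset.mem_Ioc] at hi
      omega
    have h2 : 2 * (n + 1) + 1 - (n + 1) = n + 2 := by omega
    rw [h1, h2, Finset.sum_const, Nat.card_Ioc, Nat.sub_zero, smul_eq_mul]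
    calc 2 * ((∑ i ∈ Finset.Ioc 0 n, (2 * n + 1 - i)) + n * 2 + (n + 2))
        = 2 * ∑ i ∈ Finset.Ioc 0 n, (2 * n + 1 - i) + (6 * n + 4) := by ring
      _ = 2 * n ^ 2 + n * (n + 1) + (6 * n + 4) := by rw [ih]
      _ = 2 * (n + 1) ^ 2 + (n + 1) * (n + 1 + 1) := by ring

/-- in `R = ℤ[1/ℓ, ξ]` (viewed inside `ℂ`), `ℓ = (-1)^r λ²` where
`λ = ξ^c (1-ξ)(1-ξ²)⋯(1-ξ^r)`, `ℓ = 2r+1`, and `c` is the smallest nonnegative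
integer with `2c ≡ r² + r(r+1)/2 (mod ℓ)`. -/
theorem stmt5 (ℓ r : ℕ) (hℓ : ℓ.Prime) (hr : ℓ = 2 * r + 1) (hr0 : 0 < r)
    (ξ : ℂ) (hξ : IsPrimitiveRoot ξ ℓ)
    (c : ℕ) (hc : 2 * c ≡ r ^ 2 + r * (r + 1) / 2 [MOD ℓ])
    (hcmin : ∀ c' : ℕ, c' < c → ¬ (2 * c' ≡ r ^ 2 + r * (r + 1) / 2 [MOD ℓ])) :
    (ℓ : ℂ) = (-1 : ℂ) ^ r * (ξ ^ c * ∏ i ∈ Finset.Icc 1 r, (1 - ξ ^ i)) ^ 2 := by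
  have hξ1 : ξ ^ ℓ = 1 := hξ.pow_eq_one
  subst hr
  -- the full product equals ℓ
  have h0 : ∏ i ∈ Finset.Icc 1 (2 * r), (1 - ξ ^ i)
      = ∏ k ∈ Finset.range (2 * r), (1 - ξ ^ (k + 1)) := by
    rw [← Finset.Ico_add_one_right_eq_Icc, Finset.prod_Ico_eq_prod_range]
    simp [add_comm]
  have hfull : ∏ i ∈ Finset.Icc 1 (2 * r), (1 - ξ ^ i) = ((2 * r + 1 : ℕ) : ℂ) := by
    rw [h0, hξ.prod_one_sub_pow_eq_order]
    push_cast
    ring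
  -- split the product
  have hsplit : (∏ i ∈ Finset.Ioc 0 r, (1 - ξ ^ i)) * ∏ i ∈ Finset.Ioc r (2 * r), (1 - ξ ^ i)
      = ∏ i ∈ Finset.Ioc 0 (2 * r), (1 - ξ ^ i) :=
    Finset.prod_Ioc_consecutive _ (Nat.zero_le r) (by omega)
  -- reindex the second half via i ↦ ℓ - i
  have hre : ∏ i ∈ Finset.Ioc r (2 * r), (1 - ξ ^ i)
      = ∏ i ∈ Finset.Ioc 0 r, (1 - ξ ^ (2 * r + 1 - i)) := by
    refine Finset.prod_nbij' (fun i => 2 * r + 1 - i) (fun i => 2 * r + 1 - i)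
      ?_ ?_ ?_ ?_ ?_
    · intro a ha; simp only [Finset.mem_Ioc] at *; omega
    · intro a ha; simp only [Finset.mem_Ioc] at *; omega
    · intro a ha; simp only [Finset.mem_Ioc] at ha; omega
    · intro a ha; simp only [Finset.mem_Ioc] at ha; omega
    · intro a ha
      simp only [Finset.mem_Ioc] at ha
      congr 2
      omega
  -- 1 - ξ^(ℓ-i) = -ξ^(ℓ-i) * (1 - ξ^i) for 1 ≤ i ≤ r
  have hterm : ∀ i ∈ Finset.Ioc 0 r, (1 - ξ ^ (2 * r + 1 - i))
      = (-ξ ^ (2 * r + 1 - i)) * (1 - ξ ^ i) := by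
    intro i hi
    simp only [Finset.mem_Ioc] at hi
    have h1 : ξ ^ (2 * r + 1 - i) * ξ ^ i = 1 := by
      rw [← pow_add, show 2 * r + 1 - i + i = 2 * r + 1 by omega]
      exact hξ1
    linear_combination -h1
  have h2 : ∏ i ∈ Finset.Ioc 0 r, (1 - ξ ^ (2 * r + 1 - i))
      = (-1 : ℂ) ^ r * ξ ^ (∑ i ∈ Finset.Ioc 0 r, (2 * r + 1 - i))
        * ∏ i ∈ Finset.Ioc 0 r, (1 - ξ ^ i) := by
    rw [Finset.prod_congr rfl hterm, Finset.prod_mul_distrib]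
    congr 1
    have : ∀ x ∈ Finset.Ioc 0 r, (-ξ ^ (2 * r + 1 - x))
        = (-1 : ℂ) * ξ ^ (2 * r + 1 - x) := by intro x _; ring
    rw [Finset.prod_congr rfl this, Finset.prod_mul_distrib, Finset.prod_const,
      Nat.card_Ioc, Nat.sub_zero, Finset.prod_pow_eq_pow_sum]
  -- the exponent sum equals r² + r(r+1)/2
  have hS : ∑ i ∈ Finset.Ioc 0 r, (2 * r + 1 - i) = r ^ 2 + r * (r + 1) / 2 := by
    have hA := stmt5_auxS r
    obtain ⟨k, hk⟩ := Nat.even_mul_succ_self r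
    rw [hk] at hA ⊢
    generalize r ^ 2 = a at hA ⊢
    omega
  -- match powers of ξ using the congruence
  have hpow : ξ ^ (2 * c) = ξ ^ (∑ i ∈ Finset.Ioc 0 r, (2 * r + 1 - i)) := by
    rw [hS, pow_eq_pow_mod (2 * c) hξ1,
      pow_eq_pow_mod (r ^ 2 + r * (r + 1) / 2) hξ1, hc]
  -- assemble
  have hIcc : Finset.Icc 1 r = Finset.Ioc 0 r := rfl
  have hIcc2 : Finset.Icc 1 (2 * r) = Finset.Ioc 0 (2 * r) := rfl
  have key : ((2 * r + 1 : ℕ) : ℂ)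
      = (-1 : ℂ) ^ r * ξ ^ (∑ i ∈ Finset.Ioc 0 r, (2 * r + 1 - i))
        * (∏ i ∈ Finset.Ioc 0 r, (1 - ξ ^ i)) ^ 2 := by
    rw [← hfull, hIcc2, ← hsplit, hre, h2]
    ring
  rw [hIcc, key, mul_pow, ← pow_mul, mul_comm c 2, hpow]
  ring
end

section
/- The group SE₂ over R = Z[1/ℓ, ξ] (ℓ an odd regular prime) is a perfect group, i.e., equals its own commutator subgroup. -/
/-- The Cohn relations defining `SE₂` over a commutative ring `R`: generators
`D u` (`u ∈ Rˣ`) and `E x` (`x ∈ R`), relations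
(I) `E x · E 0 · E y = D (-1) · E (x+y)`,
(II) `E x = D u · E (x u²) · D u`,
(III) `E u⁻¹ · E u · E u⁻¹ = D (-u)`,
(IV) `D u · D v = D (u v)`. -/
def SE2Rels (R : Type*) [CommRing R] : Set (FreeGroup ((Rˣ) ⊕ R)) :=
  {w | (∃ x y : R,
          w = FreeGroup.of (Sum.inr x) * FreeGroup.of (Sum.inr (0 : R)) *
              FreeGroup.of (Sum.inr y) *
              (FreeGroup.of (Sum.inl (-1 : Rˣ)) * FreeGroup.of (Sum.inr (x + y)))⁻¹)
     ∨ (∃ (x : R) (u : Rˣ),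
          w = FreeGroup.of (Sum.inr x) *
              (FreeGroup.of (Sum.inl u) * FreeGroup.of (Sum.inr (x * (u : R) ^ 2)) *
               FreeGroup.of (Sum.inl u))⁻¹)
     ∨ (∃ u : Rˣ,
          w = FreeGroup.of (Sum.inr ((u⁻¹ : Rˣ) : R)) * FreeGroup.of (Sum.inr ((u : Rˣ) : R)) *
              FreeGroup.of (Sum.inr ((u⁻¹ : Rˣ) : R)) *
              (FreeGroup.of (Sum.inl (-u)))⁻¹)
     ∨ (∃ u v : Rˣ,
          w = FreeGroup.of (Sum.inl u) * FreeGroup.of (Sum.inl v) *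
              (FreeGroup.of (Sum.inl (u * v)))⁻¹)}

/-- The group `SE₂` over `R`, presented by the Cohn relations. -/
abbrev SE2 (R : Type*) [CommRing R] := PresentedGroup (SE2Rels R)

/-- The generator `D u` of `SE₂`. -/
def SE2.D {R : Type*} [CommRing R] (u : Rˣ) : SE2 R := PresentedGroup.of (Sum.inl u)

/-- The generator `E x` of `SE₂`. -/
def SE2.E {R : Type*} [CommRing R] (x : R) : SE2 R := PresentedGroup.of (Sum.inr x)

namespace SE2Aux

variable {S : Type*} [CommRing S]

lemma mk_rel {w : FreeGroup ((Sˣ) ⊕ S)} (h : w ∈ SE2Rels S) :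
    PresentedGroup.mk (SE2Rels S) w = 1 :=
  (QuotientGroup.eq_one_iff w).mpr (Subgroup.subset_normalClosure h)

lemma rel1 (x y : S) : SE2.E x * SE2.E 0 * SE2.E y = SE2.D (-1) * SE2.E (x + y) := by
  have h := mk_rel (S := S) (Or.inl ⟨x, y, rfl⟩)
  rw [map_mul, map_mul, map_mul, map_inv, map_mul, mul_inv_eq_one] at h
  exact h

lemma rel2 (x : S) (u : Sˣ) : SE2.E x = SE2.D u * SE2.E (x * (u : S) ^ 2) * SE2.D u := by
  have h := mk_rel (S := S) (Or.inr (Or.inl ⟨x, u, rfl⟩))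
  rw [map_mul, map_inv, map_mul, map_mul, mul_inv_eq_one] at h
  exact h

lemma rel3 (u : Sˣ) :
    SE2.E ((u⁻¹ : Sˣ) : S) * SE2.E ((u : Sˣ) : S) * SE2.E ((u⁻¹ : Sˣ) : S) = SE2.D (-u) := by
  have h := mk_rel (S := S) (Or.inr (Or.inr (Or.inl ⟨u, rfl⟩)))
  rw [map_mul, map_mul, map_mul, map_inv, mul_inv_eq_one] at h
  exact h

lemma rel4 (u v : Sˣ) : SE2.D u * SE2.D v = SE2.D (u * v) := by
  have h := mk_rel (S := S) (Or.inr (Or.inr (Or.inr ⟨u, v, rfl⟩)))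
  rw [map_mul, map_mul, map_inv, mul_inv_eq_one] at h
  exact h

end SE2Aux

namespace SE2Aux

variable {S : Type*} [CommRing S]

/-- Key computation: under the stated arithmetic hypotheses on `S`, the
abelianization of `SE2 S` is trivial. -/
lemma abel_trivial (ℓ r : ℕ) (hℓ0 : ℓ ≠ 0) (hr : ℓ = 2 * r + 1)
    (ξu ℓu : Sˣ) (hℓu : (ℓu : S) = (ℓ : S))
    (hξpow : (ξu : S) ^ ℓ = 1)
    (hsum : (∑ i ∈ Finset.range ℓ, (ξu : S) ^ i) = 0)
    (g : SE2 S) : Abelianization.of g = 1 := by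
  classical
  set φ : SE2 S →* Abelianization (SE2 S) := Abelianization.of with hφ
  set d : Sˣ → Abelianization (SE2 S) := fun u => φ (SE2.D u) with hd
  set e : S → Abelianization (SE2 S) := fun x => φ (SE2.E x) with he
  have hab1 : ∀ x y : S, e x * e 0 * e y = d (-1) * e (x + y) := by
    intro x y
    have := congrArg φ (rel1 x y)
    simpa [map_mul] using this
  have hab2 : ∀ (x : S) (u : Sˣ), e x = d u * e (x * (u : S) ^ 2) * d u := by
    intro x u
    have := congrArg φ (rel2 x u)
    simpa [map_mul] using this
  have hab3 : ∀ u : Sˣ, e ((u⁻¹ : Sˣ) : S) * e ((u : Sˣ) : S) * e ((u⁻¹ : Sˣ) : S) = d (-u) := by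
    intro u
    have := congrArg φ (rel3 u)
    simpa [map_mul] using this
  -- d u * d u = 1
  have hd2 : ∀ u : Sˣ, d u * d u = 1 := by
    intro u
    have h := hab2 0 u
    rw [zero_mul] at h
    have h2 : d u * d u * e 0 = 1 * e 0 := by
      rw [one_mul, mul_assoc, mul_comm (d u) (e 0), ← mul_assoc]
      exact h.symm
    exact mul_right_cancel h2
  -- e (x u²) = e x
  have hE2 : ∀ (x : S) (u : Sˣ), e (x * (u : S) ^ 2) = e x := by
    intro x u
    have h := hab2 x u
    rw [mul_assoc, mul_comm (e (x * (u : S) ^ 2)) (d u), ← mul_assoc, hd2 u, one_mul] at h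
    exact h.symm
  -- d (-1) = e 0 * e 0
  have hd1 : d (-1) = e 0 * e 0 := by
    have h := hab1 0 0
    rw [add_zero] at h
    exact (mul_right_cancel h).symm
  -- e x * e y = e 0 * e (x + y)
  have hadd : ∀ x y : S, e x * e y = e 0 * e (x + y) := by
    intro x y
    have h := hab1 x y
    rw [hd1, mul_assoc (e 0) (e 0) (e (x + y))] at h
    rw [mul_assoc, mul_comm (e 0) (e y), ← mul_assoc] at h
    have h3 : e x * e y * e 0 = e 0 * e (x + y) * e 0 :=
      h.trans (by rw [mul_assoc, mul_comm (e 0) (e (x + y)), ← mul_assoc])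
    exact mul_right_cancel h3
  set f : S → Abelianization (SE2 S) := fun x => e x * (e 0)⁻¹ with hf
  have hf0 : f 0 = 1 := mul_inv_cancel (e 0)
  have hfadd : ∀ x y : S, f (x + y) = f x * f y := by
    intro x y
    show e (x + y) * (e 0)⁻¹ = e x * (e 0)⁻¹ * (e y * (e 0)⁻¹)
    rw [mul_mul_mul_comm, hadd x y, mul_comm (e 0) (e (x + y)), mul_assoc,
      ← mul_assoc (e 0), mul_inv_cancel, one_mul]
  have hfsq : ∀ (x : S) (u : Sˣ), f (x * (u : S) ^ 2) = f x := by
    intro x u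
    show e (x * (u : S) ^ 2) * (e 0)⁻¹ = e x * (e 0)⁻¹
    rw [hE2]
  -- f (ξ^n * x) = f x
  have hsq : ((ξu ^ (r + 1) : Sˣ) : S) ^ 2 = (ξu : S) := by
    rw [Units.val_pow_eq_pow_val, ← pow_mul]
    have : (r + 1) * 2 = ℓ + 1 := by omega
    rw [this, pow_succ, hξpow, one_mul]
  have hfxi : ∀ x : S, f ((ξu : S) * x) = f x := by
    intro x
    have hx : (ξu : S) * x = x * ((ξu ^ (r + 1) : Sˣ) : S) ^ 2 := by
      rw [hsq, mul_comm]
    rw [hx, hfsq]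
  have hfxin : ∀ (n : ℕ) (x : S), f ((ξu : S) ^ n * x) = f x := by
    intro n
    induction n with
    | zero => intro x; rw [pow_zero, one_mul]
    | succ n ih =>
      intro x
      have hx : (ξu : S) ^ (n + 1) * x = (ξu : S) ^ n * ((ξu : S) * x) := by ring
      rw [hx, ih, hfxi]
  have hfpow : ∀ (n : ℕ) (x : S), f ((n : S) * x) = f x ^ n := by
    intro n
    induction n with
    | zero => intro x; rw [Nat.cast_zero, zero_mul, pow_zero, hf0]
    | succ n ih =>
      intro x
      have hx : ((n + 1 : ℕ) : S) * x = (n : S) * x + x := by push_cast; ring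
      rw [hx, hfadd, ih, pow_succ]
  have hgeom : ∀ x : S, f x ^ ℓ = 1 := by
    intro x
    have key : ∀ n : ℕ, f ((∑ i ∈ Finset.range n, (ξu : S) ^ i) * x) = f x ^ n := by
      intro n
      induction n with
      | zero => rw [Finset.range_zero, Finset.sum_empty, zero_mul, hf0, pow_zero]
      | succ n ih =>
        rw [Finset.sum_range_succ, add_mul, hfadd, ih, hfxin, pow_succ]
    have := key ℓ
    rw [hsum, zero_mul, hf0] at this
    exact this.symm
  have hf1 : ∀ x : S, f x = 1 := by
    intro x
    have h1 : f x = f x ^ (ℓ * ℓ) := by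
      have h2 : f (x * (ℓu : S) ^ 2) = f x := hfsq x ℓu
      have hx : x * (ℓu : S) ^ 2 = ((ℓ * ℓ : ℕ) : S) * x := by
        rw [hℓu]; push_cast; ring
      rw [hx, hfpow] at h2
      exact h2.symm
    rw [pow_mul, hgeom, one_pow] at h1
    exact h1
  have hEe0 : ∀ x : S, e x = e 0 := by
    intro x
    have := hf1 x
    rwa [hf, mul_inv_eq_one] at this
  have he0 : e 0 = 1 := by
    have h := hab3 1
    rw [inv_one, hd1] at h
    simp only [Units.val_one] at h
    rw [hEe0 1] at h
    -- h : e 0 * e 0 * e 0 = e 0 * e 0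
    have h2 : e 0 * e 0 * e 0 = e 0 * e 0 * 1 := by rw [mul_one]; exact h
    exact mul_left_cancel h2
  have hEone : ∀ x : S, e x = 1 := fun x => (hEe0 x).trans he0
  have hdone : ∀ u : Sˣ, d u = 1 := by
    intro u
    have h := hab3 (-u)
    simp only [hEone, neg_neg] at h
    simpa using h.symm
  -- now conclude
  have hhom : φ = 1 := by
    apply PresentedGroup.ext
    rintro (u | x)
    · exact hdone u
    · exact hEone x
  have : φ g = 1 := by rw [hhom]; rfl
  exact this

end SE2Aux

/-- for `ℓ = 2r+1` an odd regular prime and `R = ℤ[1/ℓ, ξ]`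
(realized inside `ℂ`), the group `SE₂(R)` is perfect. -/
theorem stmt14 (ℓ r : ℕ) (hℓ : ℓ.Prime) (hr : ℓ = 2 * r + 1) (hr0 : 0 < r)
    (hreg :
      haveI : NeZero ℓ := ⟨hℓ.ne_zero⟩
      haveI : NeZero (ℓ : ℚ) := ⟨by exact_mod_cast hℓ.ne_zero⟩
      haveI : IsCyclotomicExtension {ℓ} ℚ (CyclotomicField ℓ ℚ) :=
        CyclotomicField.isCyclotomicExtension ℓ ℚ
      letI : NumberField (CyclotomicField ℓ ℚ) :=
        IsCyclotomicExtension.numberField {ℓ} ℚ _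
      ¬ ((ℓ : ℕ) ∣ NumberField.classNumber (CyclotomicField ℓ ℚ)))
    (ξ : ℂ) (hξ : IsPrimitiveRoot ξ ℓ) :
    commutator (SE2 ↥(Algebra.adjoin ℤ ({(ℓ : ℂ)⁻¹, ξ} : Set ℂ))) = ⊤ := by
  set R := Algebra.adjoin ℤ ({(ℓ : ℂ)⁻¹, ξ} : Set ℂ) with hR
  have hξmem : ξ ∈ R := Algebra.subset_adjoin (by simp)
  have hℓmem : ((ℓ : ℂ)⁻¹) ∈ R := Algebra.subset_adjoin (by simp)
  set ξR : ↥R := ⟨ξ, hξmem⟩ with hξR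
  have hℓ0 : (ℓ : ℂ) ≠ 0 := Nat.cast_ne_zero.mpr hℓ.pos.ne'
  have hξRpow : ξR ^ ℓ = 1 := by
    apply Subtype.ext
    push_cast
    exact hξ.pow_eq_one
  have hξunit : IsUnit ξR := IsUnit.of_pow_eq_one hξRpow hℓ.pos.ne'
  set ξu : (↥R)ˣ := hξunit.unit with hξu
  have hξuval : (ξu : ↥R) = ξR := hξunit.unit_spec
  have hmul : (ℓ : ↥R) * ⟨(ℓ : ℂ)⁻¹, hℓmem⟩ = 1 := by
    apply Subtype.ext
    push_cast
    exact mul_inv_cancel₀ hℓ0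
  set ℓu : (↥R)ˣ := Units.mkOfMulEqOne _ _ hmul with hℓuu
  have hℓuval : (ℓu : ↥R) = (ℓ : ↥R) := rfl
  have hξpow : (ξu : ↥R) ^ ℓ = 1 := by rw [hξuval]; exact hξRpow
  have hsum : (∑ i ∈ Finset.range ℓ, (ξu : ↥R) ^ i) = 0 := by
    rw [hξuval]
    apply Subtype.ext
    push_cast
    exact hξ.geom_sum_eq_zero hℓ.one_lt
  rw [Subgroup.eq_top_iff']
  intro g
  have h := SE2Aux.abel_trivial ℓ r hℓ.pos.ne' hr ξu ℓu hℓuval hξpow hsum g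
  exact (QuotientGroup.eq_one_iff g).mp h
end

section
/- The group SE₂ over R = Z[1/ℓ, ξ] is generated by the finite set {z, u₁, ..., u_r, a, b}, where z = D(ξ), u_i = D(1−ξ^i), a = E(0), b = E(1); that is, every D(v) and every E(x) is a word in these elements. -/
namespace SE2

variable {R : Type*} [CommRing R]

private lemma rel_one {w : FreeGroup (Rˣ ⊕ R)} (hw : w ∈ SE2Rels R) :
    PresentedGroup.mk (SE2Rels R) w = 1 :=
  (QuotientGroup.eq_one_iff w).mpr (Subgroup.subset_normalClosure hw)

lemma relI (x y : R) : E x * E 0 * E y = D (-1) * E (x + y) := by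
  have h := rel_one (R := R) (Or.inl ⟨x, y, rfl⟩)
  rw [map_mul, map_mul, map_inv, map_mul, mul_inv_eq_one] at h
  exact h

lemma relII (x : R) (u : Rˣ) : E x = D u * E (x * (u : R) ^ 2) * D u := by
  have h := rel_one (R := R) (Or.inr (Or.inl ⟨x, u, rfl⟩))
  rw [map_mul, map_inv, map_mul, map_mul, mul_inv_eq_one] at h
  exact h

lemma relIII (u : Rˣ) :
    E ((u⁻¹ : Rˣ) : R) * E ((u : Rˣ) : R) * E ((u⁻¹ : Rˣ) : R) = D (-u) := by
  have h := rel_one (R := R) (Or.inr (Or.inr (Or.inl ⟨u, rfl⟩)))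
  rw [map_mul, map_mul, map_mul, map_inv, mul_inv_eq_one] at h
  exact h

lemma relIV (u v : Rˣ) : D u * D v = D (u * v) := by
  have h := rel_one (R := R) (Or.inr (Or.inr (Or.inr ⟨u, v, rfl⟩)))
  rw [map_mul, map_mul, map_inv, mul_inv_eq_one] at h
  exact h

lemma D_one : D (1 : Rˣ) = 1 := by
  have h := relIV (1 : Rˣ) 1
  rw [mul_one] at h
  exact mul_right_cancel (h.trans (one_mul _).symm)

lemma D_inv (u : Rˣ) : D u⁻¹ = (D u)⁻¹ := by
  have h := relIV u u⁻¹
  rw [mul_inv_cancel, D_one] at h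
  exact eq_inv_of_mul_eq_one_right h

lemma D_pow (u : Rˣ) (n : ℕ) : D (u ^ n) = D u ^ n := by
  induction n with
  | zero => simpa using D_one
  | succ n ih => rw [pow_succ, pow_succ, ← relIV, ih]

/-- Key auxiliary generation lemma: if `E 0`, `E 1`, `D z`, `D v` are in the closure of `S`,
where `z` is a root of unity of odd order, `c⁻¹` lies in `ℤ[z]`, and every element of `R`
can be brought into `ℤ[z]` by multiplying by a power of `v² c`, then `S` generates `SE₂ R`. -/
lemma closure_aux {S : Set (SE2 R)}
    (n : ℕ) (z v c : Rˣ)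
    (hzn : (z : R) ^ (2 * n + 1) = 1)
    (ha : SE2.E 0 ∈ Subgroup.closure S) (hb : SE2.E 1 ∈ Subgroup.closure S)
    (hz : SE2.D z ∈ Subgroup.closure S) (hv : SE2.D v ∈ Subgroup.closure S)
    (hcinv : ((c⁻¹ : Rˣ) : R) ∈ Algebra.adjoin ℤ {(z : R)})
    (hdec : ∀ x : R, ∃ k : ℕ,
      ((v : R) ^ 2 * (c : R)) ^ k * x ∈ Algebra.adjoin ℤ {(z : R)}) :
    Subgroup.closure S = ⊤ := by
  set K := Subgroup.closure S with hK
  have hDneg1 : SE2.D (-1 : Rˣ) ∈ K := by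
    have h := relIII (1 : Rˣ)
    simp only [inv_one, Units.val_one] at h
    rw [← h]; exact mul_mem (mul_mem hb hb) hb
  have hEadd : ∀ x y : R, SE2.E x ∈ K → SE2.E y ∈ K → SE2.E (x + y) ∈ K := by
    intro x y hx hy
    have h : SE2.E (x + y) = (SE2.D (-1))⁻¹ * (SE2.E x * SE2.E 0 * SE2.E y) := by
      rw [relI]; group
    rw [h]; exact mul_mem (inv_mem hDneg1) (mul_mem (mul_mem hx ha) hy)
  have hEneg : ∀ x : R, SE2.E x ∈ K → SE2.E (-x) ∈ K := by
    intro x hx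
    have h0 := relI x (-x)
    rw [add_neg_cancel] at h0
    have h : SE2.E (-x) = (SE2.E x * SE2.E 0)⁻¹ * (SE2.D (-1) * SE2.E 0) := by
      rw [← h0]; group
    rw [h]; exact mul_mem (inv_mem (mul_mem hx ha)) (mul_mem hDneg1 ha)
  have hEz : ∀ y : R, SE2.E y ∈ K → SE2.E (y * (z : R)) ∈ K := by
    intro y hy
    have harg : y * (z : R) * ((z ^ n : Rˣ) : R) ^ 2 = y := by
      rw [Units.val_pow_eq_pow_val, ← pow_mul, mul_assoc, ← pow_succ']
      rw [show n * 2 + 1 = 2 * n + 1 by ring, hzn, mul_one]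
    have h := relII (y * (z : R)) (z ^ n)
    rw [harg] at h
    rw [h]
    have hzn' : SE2.D (z ^ n) ∈ K := by rw [D_pow]; exact pow_mem hz n
    exact mul_mem (mul_mem hzn' hy) hzn'
  have hEint : ∀ m : ℤ, SE2.E ((algebraMap ℤ R) m) ∈ K := by
    intro m
    induction m using Int.induction_on with
    | zero => simpa using ha
    | succ m ih => rw [map_add, map_one]; exact hEadd _ _ ih hb
    | pred m ih => rw [map_sub, map_one, sub_eq_add_neg]; exact hEadd _ _ ih (hEneg 1 hb)
  have hEB : ∀ y : R, y ∈ Algebra.adjoin ℤ {(z : R)} → SE2.E y ∈ K := by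
    intro y hy
    rw [Algebra.adjoin_singleton_eq_range_aeval, AlgHom.mem_range] at hy
    obtain ⟨p, rfl⟩ := hy
    induction p using Polynomial.induction_on with
    | C m => rw [Polynomial.aeval_C]; exact hEint m
    | add p q hp hq => rw [map_add]; exact hEadd _ _ hp hq
    | monomial m a ih =>
      rw [pow_succ, ← mul_assoc, map_mul, Polynomial.aeval_X]
      exact hEz _ ih
  have hEall : ∀ x : R, SE2.E x ∈ K := by
    intro x
    obtain ⟨k, hk⟩ := hdec x
    have hc1 : (c : R) * ((c⁻¹ : Rˣ) : R) = 1 := by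
      rw [← Units.val_mul, mul_inv_cancel, Units.val_one]
    have e : ((v : R) ^ 2 * (c : R)) ^ k * ((c⁻¹ : Rˣ) : R) ^ k = ((v : R) ^ k) ^ 2 := by
      rw [mul_pow, mul_assoc, ← mul_pow, hc1, one_pow, mul_one, ← pow_mul, ← pow_mul,
        mul_comm 2 k]
    have harg : x * ((v ^ k : Rˣ) : R) ^ 2 =
        ((v : R) ^ 2 * (c : R)) ^ k * x * ((c⁻¹ : Rˣ) : R) ^ k := by
      rw [Units.val_pow_eq_pow_val, ← e]; ring
    have h := relII x (v ^ k)
    rw [harg] at h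
    rw [h]
    have hvk : SE2.D (v ^ k) ∈ K := by rw [D_pow]; exact pow_mem hv k
    exact mul_mem (mul_mem hvk (hEB _ (mul_mem hk (pow_mem hcinv k)))) hvk
  have hDall : ∀ u : Rˣ, SE2.D u ∈ K := by
    intro u
    have h3 := relIII u
    have hnu : SE2.D (-u) ∈ K := by
      rw [← h3]; exact mul_mem (mul_mem (hEall _) (hEall _)) (hEall _)
    have h : SE2.D u = SE2.D (-1) * SE2.D (-u) := by
      rw [relIV, neg_one_mul, neg_neg]
    rw [h]; exact mul_mem hDneg1 hnu
  rw [hK, Subgroup.eq_top_iff']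
  intro g
  refine PresentedGroup.generated_by _ _ (fun j => ?_) g
  rcases j with u | x
  · exact hDall u
  · exact hEall x

/-- Product reindexing identity: for `x` with `x ^ (2r+1) = 1`,
`(∏_{i=1}^{r} (1-x^i))² · ∏_{i=1}^{r} (-x^{2r+1-i}) = ∏_{i=1}^{2r} (1-x^i)`. -/
private lemma key_prod (r : ℕ) (x : R) (hx : x ^ (2 * r + 1) = 1) :
    (∏ k ∈ Finset.range r, (1 - x ^ (k + 1))) ^ 2 * ∏ k ∈ Finset.range r, (-x ^ (2 * r - k)) =
      ∏ k ∈ Finset.range (2 * r), (1 - x ^ (k + 1)) := by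
  rw [two_mul r, Finset.prod_range_add]
  rw [← Finset.prod_range_reflect (fun j => 1 - x ^ (r + j + 1)) r]
  rw [sq, mul_assoc, ← Finset.prod_mul_distrib]
  congr 1
  apply Finset.prod_congr rfl
  intro k hk
  have hk' : k < r := Finset.mem_range.mp hk
  have h1 : r + (r - 1 - k) + 1 = r + r - k := by omega
  have h2 : x ^ (r + r - k) * x ^ (k + 1) = 1 := by
    rw [← pow_add, show r + r - k + (k + 1) = 2 * r + 1 by omega, hx]
  rw [h1]
  linear_combination h2

end SE2

/-- `SE₂` over `R = ℤ[1/ℓ, ξ]` is generated by the finite set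
`{z, u₁, ..., u_r, a, b}` where `z = D(ξ)`, `u_i = D(1 - ξ^i)`, `a = E(0)`,
`b = E(1)`. -/
theorem stmt15 (ℓ r : ℕ) (hℓ : ℓ.Prime) (hr : ℓ = 2 * r + 1) (hr0 : 0 < r)
    (ξ : ℂ) (hξ : IsPrimitiveRoot ξ ℓ) :
    Subgroup.closure
      {g : SE2 ↥(Algebra.adjoin ℤ ({(ℓ : ℂ)⁻¹, ξ} : Set ℂ)) |
        g = SE2.E 0 ∨ g = SE2.E 1 ∨
        (∃ u : (↥(Algebra.adjoin ℤ ({(ℓ : ℂ)⁻¹, ξ} : Set ℂ)))ˣ,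
          ((u : ↥(Algebra.adjoin ℤ ({(ℓ : ℂ)⁻¹, ξ} : Set ℂ))) : ℂ) = ξ ∧ g = SE2.D u) ∨
        (∃ (u : (↥(Algebra.adjoin ℤ ({(ℓ : ℂ)⁻¹, ξ} : Set ℂ)))ˣ) (i : ℕ),
          1 ≤ i ∧ i ≤ r ∧
          ((u : ↥(Algebra.adjoin ℤ ({(ℓ : ℂ)⁻¹, ξ} : Set ℂ))) : ℂ) = 1 - ξ ^ i ∧
          g = SE2.D u)} = ⊤ := by
  have hl0 : (ℓ : ℂ) ≠ 0 := Nat.cast_ne_zero.mpr (by omega)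
  have hξl : ξ ^ ℓ = 1 := hξ.pow_eq_one
  have hξmem : ξ ∈ Algebra.adjoin ℤ ({(ℓ : ℂ)⁻¹, ξ} : Set ℂ) :=
    Algebra.subset_adjoin (Set.mem_insert_of_mem _ rfl)
  have hlmem : (ℓ : ℂ)⁻¹ ∈ Algebra.adjoin ℤ ({(ℓ : ℂ)⁻¹, ξ} : Set ℂ) :=
    Algebra.subset_adjoin (Set.mem_insert _ _)
  set A := Algebra.adjoin ℤ ({(ℓ : ℂ)⁻¹, ξ} : Set ℂ) with hA
  let ξA : A := ⟨ξ, hξmem⟩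
  let lA : A := ⟨(ℓ : ℂ)⁻¹, hlmem⟩
  have hξA : ξA ^ ℓ = 1 := by
    apply Subtype.ext
    push_cast
    exact hξl
  have hz1 : ξA * ξA ^ (ℓ - 1) = 1 := by
    rw [← pow_succ', show ℓ - 1 + 1 = ℓ by omega]
    exact hξA
  let zunit : (↥A)ˣ := ⟨ξA, ξA ^ (ℓ - 1), hz1, by rw [mul_comm]; exact hz1⟩
  have hzn : ((zunit : (↥A)ˣ) : ↥A) ^ (2 * r + 1) = 1 := by
    rw [← hr]; exact hξA
  have hlu : ((ℓ : ℕ) : ↥A) * lA = 1 := by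
    apply Subtype.ext
    push_cast
    exact mul_inv_cancel₀ hl0
  have hξ' : IsPrimitiveRoot ξ (2 * r + 1) := hr ▸ hξ
  have hprodA : ∏ k ∈ Finset.range (2 * r), (1 - ξA ^ (k + 1)) = ((ℓ : ℕ) : ↥A) := by
    apply Subtype.ext
    push_cast
    rw [hξ'.prod_one_sub_pow_eq_order, hr]
    push_cast
    ring
  have hfac : ∀ k, k < 2 * r → IsUnit (1 - ξA ^ (k + 1)) := by
    intro k hk
    have h := Finset.mul_prod_erase (Finset.range (2 * r)) (fun j => 1 - ξA ^ (j + 1))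
      (Finset.mem_range.mpr hk)
    refine isUnit_of_mul_isUnit_left
      (y := ∏ j ∈ (Finset.range (2 * r)).erase k, (1 - ξA ^ (j + 1))) ?_
    rw [h, hprodA]
    exact IsUnit.of_mul_eq_one _ hlu
  let f : ℕ → (↥A)ˣ := fun k => if h : k < 2 * r then (hfac k h).unit else 1
  have hfval : ∀ k (hk : k < 2 * r), ((f k : (↥A)ˣ) : ↥A) = 1 - ξA ^ (k + 1) := by
    intro k hk
    simp only [f, dif_pos hk, IsUnit.unit_spec]
  let vunit : (↥A)ˣ := ∏ k ∈ Finset.range r, f k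
  have hvval : ((vunit : (↥A)ˣ) : ↥A) = ∏ k ∈ Finset.range r, (1 - ξA ^ (k + 1)) := by
    show ((Units.coeHom ↥A) (∏ k ∈ Finset.range r, f k) : ↥A) = _
    rw [map_prod]
    exact Finset.prod_congr rfl fun k hk => hfval k (by have := Finset.mem_range.mp hk; omega)
  let cunit : (↥A)ˣ := ∏ k ∈ Finset.range r, ((-1) * zunit ^ (2 * r - k))
  have hcval : ((cunit : (↥A)ˣ) : ↥A) = ∏ k ∈ Finset.range r, (-ξA ^ (2 * r - k)) := by
    show ((Units.coeHom ↥A) (∏ k ∈ Finset.range r, ((-1) * zunit ^ (2 * r - k))) : ↥A) = _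
    rw [map_prod]
    refine Finset.prod_congr rfl fun k hk => ?_
    rw [show ((Units.coeHom ↥A) ((-1) * zunit ^ (2 * r - k)) : ↥A)
        = ((((-1) * zunit ^ (2 * r - k) : (↥A)ˣ)) : ↥A) from rfl]
    rw [Units.val_mul, Units.val_pow_eq_pow_val, Units.val_neg, Units.val_one, neg_one_mul]
  have hkey : ((vunit : (↥A)ˣ) : ↥A) ^ 2 * ((cunit : (↥A)ˣ) : ↥A) = ((ℓ : ℕ) : ↥A) := by
    rw [hvval, hcval, SE2.key_prod r ξA (by rw [← hr]; exact hξA)]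
    exact hprodA
  have hBz : (ξA : ↥A) ∈ Algebra.adjoin ℤ {((zunit : (↥A)ˣ) : ↥A)} :=
    Algebra.self_mem_adjoin_singleton ℤ _
  have hlB : ((ℓ : ℕ) : ↥A) ∈ Algebra.adjoin ℤ {((zunit : (↥A)ˣ) : ↥A)} :=
    Subalgebra.natCast_mem _ ℓ
  have hcinv : ((cunit⁻¹ : (↥A)ˣ) : ↥A) ∈ Algebra.adjoin ℤ {((zunit : (↥A)ˣ) : ↥A)} := by
    rw [show (cunit⁻¹ : (↥A)ˣ) = ∏ k ∈ Finset.range r, ((-1) * zunit ^ (2 * r - k))⁻¹ from by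
      rw [← Finset.prod_inv_distrib]]
    rw [show ((∏ k ∈ Finset.range r, ((-1) * zunit ^ (2 * r - k))⁻¹ : (↥A)ˣ) : ↥A)
        = ∏ k ∈ Finset.range r, ((((-1) * zunit ^ (2 * r - k))⁻¹ : (↥A)ˣ) : ↥A) from
      map_prod (Units.coeHom ↥A) _ _]
    refine Subalgebra.prod_mem _ fun k _ => ?_
    rw [show (((-1) * zunit ^ (2 * r - k))⁻¹ : (↥A)ˣ) = (-1) * (zunit⁻¹) ^ (2 * r - k) from by
      rw [mul_inv, inv_neg_one, ← inv_pow]]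
    rw [Units.val_mul, Units.val_pow_eq_pow_val, Units.val_neg, Units.val_one, neg_one_mul]
    refine Subalgebra.neg_mem _ (Subalgebra.pow_mem _ ?_ _)
    show (ξA ^ (ℓ - 1) : ↥A) ∈ _
    exact Subalgebra.pow_mem _ hBz _
  have hdecL : ∀ x : ↥A, ∃ k : ℕ,
      ((ℓ : ℕ) : ↥A) ^ k * x ∈ Algebra.adjoin ℤ {((zunit : (↥A)ˣ) : ↥A)} := by
    rintro ⟨c0, hc0⟩
    induction hc0 using Algebra.adjoin_induction with
    | mem w hw =>
      rcases hw with rfl | rfl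
      · refine ⟨1, ?_⟩
        have e : ((ℓ : ℕ) : ↥A) ^ 1 * ⟨(ℓ : ℂ)⁻¹, Algebra.subset_adjoin (Set.mem_insert _ _)⟩
            = (1 : ↥A) := by
          apply Subtype.ext
          push_cast
          rw [pow_one]
          exact mul_inv_cancel₀ hl0
        rw [e]
        exact Subalgebra.one_mem _
      · refine ⟨0, ?_⟩
        rw [pow_zero, one_mul]
        exact hBz
    | algebraMap m =>
      refine ⟨0, ?_⟩
      have e : ((ℓ : ℕ) : ↥A) ^ 0 * (⟨algebraMap ℤ ℂ m, Subalgebra.algebraMap_mem _ m⟩ : ↥A)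
          = algebraMap ℤ ↥A m := by
        apply Subtype.ext
        push_cast [algebraMap_int_eq]
        simp
      rw [e]
      exact Subalgebra.algebraMap_mem _ m
    | add u w hu hw ihu ihw =>
      obtain ⟨k1, h1⟩ := ihu
      obtain ⟨k2, h2⟩ := ihw
      refine ⟨k1 + k2, ?_⟩
      show ((ℓ : ℕ) : ↥A) ^ (k1 + k2) * ((⟨u, hu⟩ : ↥A) + ⟨w, hw⟩) ∈ _
      have e : ((ℓ : ℕ) : ↥A) ^ (k1 + k2) * ((⟨u, hu⟩ : ↥A) + ⟨w, hw⟩) =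
          ((ℓ : ℕ) : ↥A) ^ k2 * (((ℓ : ℕ) : ↥A) ^ k1 * ⟨u, hu⟩) +
          ((ℓ : ℕ) : ↥A) ^ k1 * (((ℓ : ℕ) : ↥A) ^ k2 * ⟨w, hw⟩) := by
        rw [pow_add]; ring
      rw [e]
      exact Subalgebra.add_mem _
        (Subalgebra.mul_mem _ (Subalgebra.pow_mem _ hlB _) h1)
        (Subalgebra.mul_mem _ (Subalgebra.pow_mem _ hlB _) h2)
    | mul u w hu hw ihu ihw =>
      obtain ⟨k1, h1⟩ := ihu
      obtain ⟨k2, h2⟩ := ihw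
      refine ⟨k1 + k2, ?_⟩
      show ((ℓ : ℕ) : ↥A) ^ (k1 + k2) * ((⟨u, hu⟩ : ↥A) * ⟨w, hw⟩) ∈ _
      have e : ((ℓ : ℕ) : ↥A) ^ (k1 + k2) * ((⟨u, hu⟩ : ↥A) * ⟨w, hw⟩) =
          (((ℓ : ℕ) : ↥A) ^ k1 * ⟨u, hu⟩) * (((ℓ : ℕ) : ↥A) ^ k2 * ⟨w, hw⟩) := by
        rw [pow_add]; ring
      rw [e]
      exact Subalgebra.mul_mem _ h1 h2
  have hdec : ∀ x : ↥A, ∃ k : ℕ,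
      (((vunit : (↥A)ˣ) : ↥A) ^ 2 * ((cunit : (↥A)ˣ) : ↥A)) ^ k * x ∈
        Algebra.adjoin ℤ {((zunit : (↥A)ˣ) : ↥A)} := by
    intro x
    obtain ⟨k, hk⟩ := hdecL x
    exact ⟨k, by rwa [hkey]⟩
  refine SE2.closure_aux r zunit vunit cunit hzn ?_ ?_ ?_ ?_ hcinv hdec
  · exact Subgroup.subset_closure (Or.inl rfl)
  · exact Subgroup.subset_closure (Or.inr (Or.inl rfl))
  · exact Subgroup.subset_closure (Or.inr (Or.inr (Or.inl ⟨zunit, rfl, rfl⟩)))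
  · show SE2.D (∏ k ∈ Finset.range r, f k) ∈ _
    refine Finset.prod_induction f (fun w => SE2.D w ∈ _)
      (fun a b ha hb => ?_) ?_ (fun k hk => ?_)
    · show SE2.D (a * b) ∈ _
      rw [← SE2.relIV]; exact mul_mem ha hb
    · show SE2.D 1 ∈ _
      rw [SE2.D_one]; exact one_mem _
    · show SE2.D (f k) ∈ _
      have hk' : k < r := Finset.mem_range.mp hk
      refine Subgroup.subset_closure
        (Or.inr (Or.inr (Or.inr ⟨f k, k + 1, by omega, by omega, ?_, rfl⟩)))
      rw [hfval k (by omega)]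
      push_cast
      ring
end
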